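/- arXiv:1401.7574 — 5 statements merged into one kernel-verified Lean document; each statement's English description precedes it below -/
import Mathlib

section
/- Optimal causation entropy principle: under the temporal, spatial, and faithfulness Markov assumptions, define the family K = {K ⊆ V : C_{K'→I} ≤ C_{K→I} for all K' ⊆ V} of node sets maximizing causation entropy to I. Then the set of causal parents satisfies N_I = ∩_{K ∈ K} K, and N_I is the unique minimal element of K. -/
/-- Optimal causation entropy principle: given the established properties of causation
entropy (no false positive, true positive, decomposition), the set of causal parents
`N_I` equals the intersection of the family `𝒦` of node sets maximizing causation
entropy to `I`, and `N_I` is the unique minimal element of `𝒦`. -/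
theorem optimal_causation_entropy_principle {V : Type*} [Fintype V] [DecidableEq V]
    (NI : Finset V)                      -- the set of causal parents of I
    (C : Finset V → ℝ)                   -- K ↦ C_{K→I}
    (Ccond : Finset V → Finset V → ℝ)    -- (J, K) ↦ C_{J→I|K}
    (hdecomp : ∀ J K, Ccond J K = C (K ∪ J) - C K)
    (hnofp : ∀ J K, NI ⊆ K → Ccond J K = 0)
    (htp : ∀ J K, J ⊆ NI → ¬ J ⊆ K → 0 < Ccond J K) :
    (NI ∈ {K : Finset V | ∀ K', C K' ≤ C K}) ∧
    ((NI : Set V) = ⋂ K ∈ {K : Finset V | ∀ K', C K' ≤ C K}, (K : Set V)) ∧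
    (∀ K ∈ {K : Finset V | ∀ K', C K' ≤ C K}, NI ⊆ K) := by
  -- For any K', adding K' to NI does not change C: C (NI ∪ K') = C NI.
  have hconst : ∀ K', C (NI ∪ K') = C NI := by
    intro K'
    have h := hnofp K' NI (subset_refl NI)
    rw [hdecomp] at h
    linarith
  -- NI is a maximizer.
  have hmax : ∀ K', C K' ≤ C NI := by
    intro K'
    by_cases h : NI ⊆ K'
    · have h0 := hnofp NI K' h
      rw [hdecomp] at h0
      have : C (K' ∪ NI) = C K' := by linarith
      have h1 : C (K' ∪ NI) = C NI := by rw [Finset.union_comm]; exact hconst K'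
      linarith
    · have hpos := htp NI K' (subset_refl NI) h
      rw [hdecomp] at hpos
      have : C (K' ∪ NI) = C NI := by rw [Finset.union_comm]; exact hconst K'
      linarith
  -- Every maximizer contains NI.
  have hmin : ∀ K ∈ {K : Finset V | ∀ K', C K' ≤ C K}, NI ⊆ K := by
    intro K hK
    by_contra h
    have hpos := htp NI K (subset_refl NI) h
    rw [hdecomp] at hpos
    have hle : C (K ∪ NI) ≤ C K := hK (K ∪ NI)
    linarith
  refine ⟨hmax, ?_, hmin⟩
  apply Set.Subset.antisymm
  · intro x hx
    simp only [Set.mem_iInter]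
    intro K hK
    exact_mod_cast hmin K hK hx
  · intro x hx
    simp only [Set.mem_iInter] at hx
    exact hx NI hmax
end

section
/- Correctness of aggregative discovery: under the Markov assumptions, define sequences K_0 = ∅ and, for i ≥ 1, x_i = max_{x ∈ V∖K_{i-1}} C_{x→I|K_{i-1}}, p_i = argmax of the same, K_i = {p_1,...,p_i}. Then there exists q with |N_I| ≤ q ≤ n such that x_i > 0 for 1 ≤ i ≤ q, x_i = 0 for i > q, and N_I ⊆ K_q. -/
/-- Correctness of aggregative discovery of causal nodes: with `K_0 = ∅` and, at each
step, `p_i` a maximizer of `C_{x→I|K_{i-1}}` over `x ∈ V ∖ K_{i-1}`, `x_i` the maximal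
value, and `K_i = K_{i-1} ∪ {p_i}`, there exists `q` with `|N_I| ≤ q ≤ n` such that
`x_i > 0` for `1 ≤ i ≤ q`, `x_i = 0` for `i > q`, and `N_I ⊆ K_q`. -/
theorem aggregative_discovery {V : Type*} [Fintype V] [DecidableEq V]
    (NI : Finset V)                  -- the set of causal parents of I
    (Ccond : V → Finset V → ℝ)       -- (j, K) ↦ C_{j→I|K}
    (htp : ∀ j K, j ∈ NI → j ∉ K → 0 < Ccond j K)
    (hnofp : ∀ j K, NI ⊆ K → Ccond j K = 0)
    (hmem : ∀ j K, j ∈ K → Ccond j K = 0)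
    (n : ℕ) (hn : n = Fintype.card V)
    (p : ℕ → V) (x : ℕ → ℝ) (Kseq : ℕ → Finset V)
    (hK0 : Kseq 0 = ∅)
    (hKstep : ∀ i, 1 ≤ i → i ≤ n → Kseq i = insert (p i) (Kseq (i - 1)))
    (hKconst : ∀ i, n ≤ i → Kseq i = Kseq n)
    (hpnew : ∀ i, 1 ≤ i → i ≤ n → p i ∉ Kseq (i - 1))
    (hx : ∀ i, 1 ≤ i → i ≤ n → x i = Ccond (p i) (Kseq (i - 1)))
    (hmax : ∀ i, 1 ≤ i → i ≤ n → ∀ j, j ∉ Kseq (i - 1) → Ccond j (Kseq (i - 1)) ≤ x i)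
    (hxbig : ∀ i, n < i → x i = 0) :
    ∃ q, NI.card ≤ q ∧ q ≤ n ∧ (∀ i, 1 ≤ i → i ≤ q → 0 < x i) ∧
      (∀ i, q < i → x i = 0) ∧ NI ⊆ Kseq q := by
  -- cardinality of Kseq
  have hcard : ∀ i, i ≤ n → (Kseq i).card = i := by
    intro i
    induction i with
    | zero => intro _; simp [hK0]
    | succ k ih =>
      intro hk
      have hk' : k ≤ n := Nat.le_of_succ_le hk
      rw [hKstep (k+1) (Nat.succ_le_succ (Nat.zero_le k)) hk]
      simp only [Nat.add_sub_cancel]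
      rw [Finset.card_insert_of_notMem]
      · rw [ih hk']
      · have := hpnew (k+1) (Nat.succ_le_succ (Nat.zero_le k)) hk
        simpa using this
  -- monotonicity
  have hstep : ∀ i, Kseq i ⊆ Kseq (i + 1) := by
    intro i
    by_cases h : i + 1 ≤ n
    · rw [hKstep (i+1) (Nat.succ_le_succ (Nat.zero_le i)) h]
      simp only [Nat.add_sub_cancel]
      exact Finset.subset_insert _ _
    · have hni : n ≤ i := Nat.lt_succ_iff.mp (Nat.lt_of_not_le h)
      rw [hKconst (i+1) (Nat.le_succ_of_le hni), hKconst i hni]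
  have hmono : ∀ i j, i ≤ j → Kseq i ⊆ Kseq j :=
    fun i j h => monotone_nat_of_le_succ hstep h
  -- Kseq n = univ
  have hKn : Kseq n = Finset.univ := by
    apply Finset.eq_univ_of_card
    rw [hcard n le_rfl, hn]
  have hNIn : NI ⊆ Kseq n := by rw [hKn]; exact Finset.subset_univ _
  -- q = least i with NI ⊆ Kseq i
  have hex : ∃ i, NI ⊆ Kseq i := ⟨n, hNIn⟩
  classical
  set q := Nat.find hex with hq
  have hqspec : NI ⊆ Kseq q := Nat.find_spec hex
  have hqle : q ≤ n := Nat.find_le hNIn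
  refine ⟨q, ?_, hqle, ?_, ?_, hqspec⟩
  · -- NI.card ≤ q
    calc NI.card ≤ (Kseq q).card := Finset.card_le_card hqspec
    _ = q := hcard q hqle
  · -- positivity for 1 ≤ i ≤ q
    intro i h1 hiq
    have hin : i ≤ n := le_trans hiq hqle
    have hlt : i - 1 < q := Nat.lt_of_lt_of_le (Nat.sub_lt (Nat.lt_of_lt_of_le Nat.zero_lt_one h1) Nat.zero_lt_one) hiq
    have hns : ¬ NI ⊆ Kseq (i - 1) := Nat.find_min hex hlt
    obtain ⟨j, hjNI, hjK⟩ := Finset.not_subset.mp hns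
    have := htp j (Kseq (i-1)) hjNI hjK
    exact lt_of_lt_of_le this (hmax i h1 hin j hjK)
  · -- zero for i > q
    intro i hqi
    by_cases hin : i ≤ n
    · have h1 : 1 ≤ i := Nat.lt_of_le_of_lt (Nat.zero_le q) hqi
      rw [hx i h1 hin]
      apply hnofp
      exact hqspec.trans (hmono q (i-1) (Nat.le_sub_one_of_lt hqi))
    · exact hxbig i (Nat.lt_of_not_le hin)
end

section
/- Correctness of progressive removal: let K = {p_1,...,p_q} with N_I ⊆ K. Define K_0 = K and, for 1 ≤ i ≤ q, K_i = K_{i-1} if C_{p_i→I|(K_{i-1}∖{p_i})} > 0 and K_i = K_{i-1}∖{p_i} otherwise. Then K_q = N_I. -/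
/-- Correctness of progressive removal of non-causal nodes: starting from
`K_0 = K = {p_1,...,p_q} ⊇ N_I` and removing `p_i` at step `i` exactly when
`C_{p_i→I|(K_{i-1}∖{p_i})}` is not positive, the final set is `K_q = N_I`. -/
theorem progressive_removal {V : Type*} [Fintype V] [DecidableEq V]
    (NI : Finset V)                  -- the set of causal parents of I
    (Ccond : V → Finset V → ℝ)       -- (j, L) ↦ C_{j→I|L}
    (htp : ∀ j L, j ∈ NI → j ∉ L → 0 < Ccond j L)
    (hnofp : ∀ j L, NI ⊆ L → Ccond j L = 0)
    (q : ℕ) (p : ℕ → V) (K : Finset V)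
    (hK : K = (Finset.Icc 1 q).image p)
    (hNIK : NI ⊆ K)
    (Kseq : ℕ → Finset V)
    (hK0 : Kseq 0 = K)
    (hstep : ∀ i, 1 ≤ i → i ≤ q →
      Kseq i = if 0 < Ccond (p i) (Kseq (i - 1) \ {p i}) then Kseq (i - 1)
               else Kseq (i - 1) \ {p i}) :
    Kseq q = NI := by
  have key : ∀ i, i ≤ q → NI ⊆ Kseq i ∧ Kseq i ⊆ NI ∪ (Finset.Icc (i+1) q).image p := by
    intro i
    induction i with
    | zero =>
      intro _
      refine ⟨by rw [hK0]; exact hNIK, ?_⟩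
      rw [hK0, hK]
      exact Finset.subset_union_right
    | succ n ih =>
      intro hn
      obtain ⟨h1, h2⟩ := ih (Nat.le_of_succ_le hn)
      have hs := hstep (n+1) (Nat.succ_le_succ (Nat.zero_le n)) hn
      simp only [Nat.add_sub_cancel] at hs
      by_cases hpos : 0 < Ccond (p (n+1)) (Kseq n \ {p (n+1)})
      · rw [if_pos hpos] at hs
        have hcase : p (n+1) ∈ NI ∨ p (n+1) ∉ Kseq n := by
          by_contra hc
          push_neg at hc
          obtain ⟨hni, hin⟩ := hc
          have hsub : NI ⊆ Kseq n \ {p (n+1)} := by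
            intro x hx
            refine Finset.mem_sdiff.2 ⟨h1 hx, ?_⟩
            simp only [Finset.mem_singleton]
            rintro rfl; exact hni hx
          exact absurd (hnofp _ _ hsub) (ne_of_gt hpos)
        refine ⟨by rw [hs]; exact h1, ?_⟩
        rw [hs]
        intro x hx
        rcases Finset.mem_union.1 (h2 hx) with hxN | hxI
        · exact Finset.mem_union_left _ hxN
        · obtain ⟨k, hk, rfl⟩ := Finset.mem_image.1 hxI
          rw [Finset.mem_Icc] at hk
          rcases Nat.lt_or_ge (n+1) k with hk' | hk'
          · exact Finset.mem_union_right _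
              (Finset.mem_image.2 ⟨k, Finset.mem_Icc.2 ⟨hk', hk.2⟩, rfl⟩)
          · have hkeq : k = n+1 := le_antisymm hk' hk.1
            subst hkeq
            rcases hcase with h | h
            · exact Finset.mem_union_left _ h
            · exact absurd hx h
      · rw [if_neg hpos] at hs
        have hni : p (n+1) ∉ NI := fun hmem => hpos (htp _ _ hmem (by simp))
        constructor
        · rw [hs]
          intro x hx
          refine Finset.mem_sdiff.2 ⟨h1 hx, ?_⟩
          simp only [Finset.mem_singleton]
          rintro rfl; exact hni hx
        · rw [hs]
          intro x hx
          obtain ⟨hx1, hx2⟩ := Finset.mem_sdiff.1 hx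
          simp only [Finset.mem_singleton] at hx2
          rcases Finset.mem_union.1 (h2 hx1) with hxN | hxI
          · exact Finset.mem_union_left _ hxN
          · obtain ⟨k, hk, rfl⟩ := Finset.mem_image.1 hxI
            rw [Finset.mem_Icc] at hk
            rcases Nat.lt_or_ge (n+1) k with hk' | hk'
            · exact Finset.mem_union_right _
                (Finset.mem_image.2 ⟨k, Finset.mem_Icc.2 ⟨hk', hk.2⟩, rfl⟩)
            · have hkeq : k = n+1 := le_antisymm hk' hk.1
              subst hkeq
              exact absurd rfl hx2
  obtain ⟨h1, h2⟩ := key q le_rfl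
  refine Finset.Subset.antisymm ?_ h1
  intro x hx
  rcases Finset.mem_union.1 (h2 hx) with h | h
  · exact h
  · simp [Finset.Icc_eq_empty_of_lt (Nat.lt_succ_self q)] at h
end

section
/- Directed linear chain: consider X^{(i)}_t = X^{(i-1)}_{t-1} + ξ^{(i)}_t for i = 2,...,n and X^{(1)}_t = ξ^{(1)}_t, with independent ξ^{(i)}_t ~ N(0, σ_i²). Then the stationary covariances are Φ(0)_{ij} = δ_{ij} Σ_{k=1}^{j} σ_k² and Φ(1)_{ij} = δ_{i,j+1} Σ_{k=1}^{j} σ_k², and the causation entropy satisfies C_{j→i} = (1/2) δ_{i,j+1} log(1 + (Σ_{k=1}^{j} σ_k²)/σ_i²). In particular C_{j→i} > 0 if and only if i = j+1. -/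
open Matrix

/-- Directed linear chain `1 → 2 → ⋯ → n` (0-indexed: link `j → j+1`) with node noise
variances `σ_i²`: the stationary covariances are `Φ(0)_{ij} = δ_{ij} Σ_{k≤j} σ_k²` and
`Φ(1)_{ij} = δ_{i,j+1} Σ_{k≤j} σ_k²`, and the (unconditioned, Gaussian) causation
entropy is `C_{j→i} = (1/2) δ_{i,j+1} log (1 + (Σ_{k≤j} σ_k²)/σ_i²)`; in particular
`C_{j→i} > 0` iff `i = j + 1`. -/
theorem directed_linear_chain {n : ℕ} (σ : Fin n → ℝ) (hσ : ∀ i, 0 < σ i)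
    (A : Matrix (Fin n) (Fin n) ℝ)
    (hA : ∀ i j, A i j = if (i : ℕ) = (j : ℕ) + 1 then 1 else 0)
    (S : Matrix (Fin n) (Fin n) ℝ) (hS : S = Matrix.diagonal (fun i => σ i ^ 2))
    (Φ0 Φ1 : Matrix (Fin n) (Fin n) ℝ)
    (hΦ0 : Φ0 = ∑' k : ℕ, A ^ k * S * (A ^ k)ᵀ)
    (hΦ1 : Φ1 = A * Φ0)
    (C : Fin n → Fin n → ℝ)   -- C j i = C_{j→i}, via the Gaussian formula
    (hC : ∀ j i, C j i = (1 / 2) * Real.log (Φ0 i i) -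
        (1 / 2) * Real.log (Φ0 i i - (Φ1 i j) ^ 2 / Φ0 j j)) :
    (∀ i j, Φ0 i j =
      if i = j then ∑ k ∈ Finset.univ.filter (· ≤ j), σ k ^ 2 else 0) ∧
    (∀ i j, Φ1 i j =
      if (i : ℕ) = (j : ℕ) + 1 then ∑ k ∈ Finset.univ.filter (· ≤ j), σ k ^ 2 else 0) ∧
    (∀ j i, C j i =
      if (i : ℕ) = (j : ℕ) + 1 then
        (1 / 2) * Real.log (1 + (∑ k ∈ Finset.univ.filter (· ≤ j), σ k ^ 2) / σ i ^ 2)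
      else 0) ∧
    (∀ j i, 0 < C j i ↔ (i : ℕ) = (j : ℕ) + 1) := by
  set P : Fin n → ℝ := fun j => ∑ k ∈ Finset.univ.filter (· ≤ j), σ k ^ 2 with hPdef
  set σ' : ℕ → ℝ := fun m => if h : m < n then σ ⟨m, h⟩ ^ 2 else 0 with hσ'def
  have hσ'v : ∀ (k : Fin n), σ' (k : ℕ) = σ k ^ 2 := by
    intro k; simp [hσ'def, k.isLt]
  have hPpos : ∀ j, 0 < P j := by
    intro j
    apply Finset.sum_pos
    · intro k _
      exact pow_pos (hσ k) 2
    · exact ⟨j, by simp⟩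
  -- powers of A
  have hApow : ∀ (k : ℕ) (i j : Fin n), (A ^ k) i j = if (i : ℕ) = (j : ℕ) + k then 1 else 0 := by
    intro k
    induction k with
    | zero =>
      intro i j
      simp [Matrix.one_apply, Fin.ext_iff]
    | succ k ih =>
      intro i j
      rw [pow_succ, Matrix.mul_apply]
      rcases lt_or_ge ((j:ℕ)+1) n with h | h
      · rw [Finset.sum_eq_single (⟨(j:ℕ)+1, h⟩ : Fin n)]
        · rw [ih, hA]
          simp only [Fin.val_mk, if_pos rfl, mul_one]
          split_ifs with h1 h2 h2 <;> norm_num <;> omega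
        · intro b _ hb
          rw [hA, if_neg (fun hc => hb (by exact Fin.ext hc)), mul_zero]
        · intro hb; exact absurd (Finset.mem_univ _) hb
      · rw [Finset.sum_eq_zero, if_neg (by have := i.isLt; omega)]
        intro b _
        rw [hA, if_neg (by have := b.isLt; omega), mul_zero]
  -- entries of the k-th summand
  have hM : ∀ (k : ℕ) (i j : Fin n), (A ^ k * S * (A ^ k)ᵀ) i j =
      if (i : ℕ) = (j : ℕ) ∧ k ≤ (j : ℕ) then σ' ((j : ℕ) - k) else 0 := by
    intro k i j
    rw [Matrix.mul_apply]
    by_cases hij : (i : ℕ) = (j : ℕ) ∧ k ≤ (j : ℕ)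
    · obtain ⟨hij1, hij2⟩ := hij
      have hlt : (j : ℕ) - k < n := lt_of_le_of_lt (Nat.sub_le _ _) j.isLt
      rw [Finset.sum_eq_single (⟨(j:ℕ) - k, hlt⟩ : Fin n)]
      · rw [hS, Matrix.mul_diagonal, Matrix.transpose_apply, hApow, hApow]
        simp only [Fin.val_mk]
        rw [if_pos (by omega), if_pos (by omega), if_pos (by exact ⟨hij1, hij2⟩)]
        simp [hσ'def, hlt]
      · intro b _ hb
        rw [hS, Matrix.mul_diagonal, Matrix.transpose_apply, hApow, hApow]
        have hbne : (b : ℕ) ≠ (j : ℕ) - k := fun hc => hb (Fin.ext hc)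
        rw [if_neg (by omega)]
        ring
      · intro hb; exact absurd (Finset.mem_univ _) hb
    · rw [Finset.sum_eq_zero, if_neg hij]
      intro b _
      rw [hS, Matrix.mul_diagonal, Matrix.transpose_apply, hApow, hApow]
      by_cases h1 : (i : ℕ) = (b : ℕ) + k
      · rw [if_neg (fun hc : (j:ℕ) = (b:ℕ) + k => hij ⟨by omega, by omega⟩)]
        ring
      · rw [if_neg h1]; ring
  -- the tsum is a finite sum
  have hAzero : ∀ k ∉ Finset.range n, A ^ k * S * (A ^ k)ᵀ = 0 := by
    intro k hk
    simp only [Finset.mem_range, not_lt] at hk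
    have hz : A ^ k = 0 := by
      ext i j
      rw [hApow, if_neg (by have := i.isLt; omega)]
      simp
    rw [hz]
    simp
  have hΦ0e : ∀ i j, Φ0 i j = ∑ k ∈ Finset.range n, (A ^ k * S * (A ^ k)ᵀ) i j := by
    intro i j
    rw [hΦ0, tsum_eq_sum hAzero, Matrix.sum_apply]
  -- filter-range identity
  have hfilt : ∀ (j : Fin n), (Finset.range n).filter (fun m => m ≤ (j : ℕ)) =
      Finset.range ((j : ℕ) + 1) := by
    intro j
    ext m
    simp only [Finset.mem_filter, Finset.mem_range]
    have := j.isLt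
    omega
  -- Φ0 entries
  have hΦ0v : ∀ i j, Φ0 i j = if i = j then P j else 0 := by
    intro i j
    rw [hΦ0e]
    by_cases hij : i = j
    · subst hij
      rw [if_pos rfl]
      have step1 : ∑ k ∈ Finset.range n, (A ^ k * S * (A ^ k)ᵀ) i i =
          ∑ k ∈ Finset.range ((i:ℕ)+1), σ' ((i:ℕ) - k) := by
        rw [← hfilt i, Finset.sum_filter]
        apply Finset.sum_congr rfl
        intro k _
        rw [hM]
        by_cases hk : k ≤ (i : ℕ)
        · rw [if_pos ⟨rfl, hk⟩, if_pos hk]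
        · rw [if_neg (by tauto), if_neg hk]
      rw [step1]
      have step2 : ∑ k ∈ Finset.range ((i:ℕ)+1), σ' ((i:ℕ) - k) =
          ∑ k ∈ Finset.range ((i:ℕ)+1), σ' k := by
        rw [← Finset.sum_range_reflect]
        apply Finset.sum_congr rfl
        intro k hk
        simp only [Finset.mem_range] at hk
        congr 1
        omega
      rw [step2]
      have h1 : P i = ∑ k : Fin n, (if (k:ℕ) ≤ (i:ℕ) then σ' (k:ℕ) else 0) := by
        simp only [hPdef]
        rw [Finset.sum_filter]
        apply Finset.sum_congr rfl
        intro k _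
        by_cases hk : k ≤ i
        · rw [if_pos hk, if_pos (by exact_mod_cast hk), hσ'v]
        · rw [if_neg hk, if_neg (by exact_mod_cast hk)]
      rw [h1, Fin.sum_univ_eq_sum_range (fun m => if m ≤ (i:ℕ) then σ' m else 0) n,
        ← Finset.sum_filter, hfilt i]
    · rw [if_neg hij, Finset.sum_eq_zero]
      intro k _
      rw [hM, if_neg (by rw [Fin.ext_iff] at hij; tauto)]
  -- Φ1 entries
  have hΦ1v : ∀ i j, Φ1 i j = if (i:ℕ) = (j:ℕ) + 1 then P j else 0 := by
    intro i j
    rw [hΦ1, Matrix.mul_apply]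
    rw [Finset.sum_eq_single j]
    · rw [hA, hΦ0v, if_pos rfl]
      split_ifs with h1 <;> ring
    · intro b _ hb
      rw [hΦ0v, if_neg hb, mul_zero]
    · intro h; exact absurd (Finset.mem_univ _) h
  -- the increment identity
  have hPij : ∀ (j i : Fin n), (i:ℕ) = (j:ℕ) + 1 → P i = P j + σ i ^ 2 := by
    intro j i h
    have hins : Finset.univ.filter (· ≤ i) = insert i (Finset.univ.filter (· ≤ j)) := by
      ext k
      simp only [Finset.mem_filter, Finset.mem_univ, true_and, Finset.mem_insert]
      rw [Fin.le_def, Fin.le_def, Fin.ext_iff]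
      omega
    simp only [hPdef, hins]
    rw [Finset.sum_insert (by simp only [Finset.mem_filter, Finset.mem_univ, true_and, Fin.le_def]; omega)]
    ring
  -- causation entropy values
  have hCv : ∀ j i, C j i = if (i:ℕ) = (j:ℕ) + 1 then
      (1/2) * Real.log (1 + P j / σ i ^ 2) else 0 := by
    intro j i
    rw [hC, hΦ1v, hΦ0v, hΦ0v, if_pos rfl, if_pos rfl]
    by_cases h : (i:ℕ) = (j:ℕ) + 1
    · rw [if_pos h, if_pos h]
      have hPj := hPpos j
      have hPi := hPpos i
      have hPjne : P j ≠ 0 := ne_of_gt hPj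
      have hσi : σ i ≠ 0 := ne_of_gt (hσ i)
      have hPe := hPij j i h
      have e1 : P i - P j ^ 2 / P j = σ i ^ 2 := by
        rw [hPe]; field_simp; ring
      rw [e1, ← mul_sub, ← Real.log_div (ne_of_gt hPi) (by positivity)]
      congr 1
      rw [hPe]
      field_simp
      ring
    · rw [if_neg h, if_neg h]
      norm_num
  -- positivity
  have hCpos : ∀ j i, 0 < C j i ↔ (i:ℕ) = (j:ℕ) + 1 := by
    intro j i
    rw [hCv]
    by_cases h : (i:ℕ) = (j:ℕ) + 1
    · rw [if_pos h]
      refine iff_of_true ?_ h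
      have h1 : 0 < P j / σ i ^ 2 := div_pos (hPpos j) (pow_pos (hσ i) 2)
      have h2 : 0 < Real.log (1 + P j / σ i ^ 2) := Real.log_pos (by linarith)
      linarith
    · rw [if_neg h]
      exact iff_of_false (lt_irrefl 0) h
  exact ⟨hΦ0v, hΦ1v, hCv, hCpos⟩
end

section
/- Directed loop: for the process on a directed n-cycle with uniform weight 0 < w < 1 (X^{(i)}_t = w X^{(p_i)}_{t-1} + ξ^{(i)}_t, ξ^{(i)}_t ~ N(0,σ²) i.i.d., where p_i is the unique in-neighbor of i), the stationary covariances are Φ(0)_{ij} = δ_{ij} σ²/(1−w²) and Φ(1)_{ij} = δ_{p_i,j} σ² w/(1−w²), and the causation entropy is C_{j→i} = (1/2) δ_{p_i,j} log(1/(1−w²)). -/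
open Matrix

/-- Directed loop on `n` nodes with uniform weight `0 < w < 1` and i.i.d. `N(0,σ²)`
noise: with `p_i = i - 1 (mod n)` the unique in-neighbor of `i`, the stationary
covariances are `Φ(0)_{ij} = δ_{ij} σ²/(1-w²)` and `Φ(1)_{ij} = δ_{p_i,j} σ²w/(1-w²)`,
and the (unconditioned, Gaussian) causation entropy is
`C_{j→i} = (1/2) δ_{p_i,j} log (1/(1-w²))`. -/
theorem directed_loop {n : ℕ} [NeZero n] (w σ : ℝ) (hw0 : 0 < w) (hw1 : w < 1)
    (hσ : 0 < σ)
    (A : Matrix (Fin n) (Fin n) ℝ)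
    (hA : ∀ i j, A i j = if j = i - 1 then w else 0)
    (S : Matrix (Fin n) (Fin n) ℝ) (hS : S = Matrix.diagonal (fun _ => σ ^ 2))
    (Φ0 Φ1 : Matrix (Fin n) (Fin n) ℝ)
    (hΦ0 : Φ0 = ∑' k : ℕ, A ^ k * S * (A ^ k)ᵀ)
    (hΦ1 : Φ1 = A * Φ0)
    (C : Fin n → Fin n → ℝ)   -- C j i = C_{j→i}, via the Gaussian formula
    (hC : ∀ j i, C j i = (1 / 2) * Real.log (Φ0 i i /
        (Φ0 i i - (Φ1 i j) ^ 2 / Φ0 j j))) :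
    (∀ i j, Φ0 i j = if i = j then σ ^ 2 / (1 - w ^ 2) else 0) ∧
    (∀ i j, Φ1 i j = if j = i - 1 then σ ^ 2 * w / (1 - w ^ 2) else 0) ∧
    (∀ j i, C j i = if j = i - 1 then (1 / 2) * Real.log (1 / (1 - w ^ 2)) else 0) := by
  have hw2 : (0:ℝ) < 1 - w ^ 2 := by nlinarith
  open Fin.NatCast in
  have hAk : ∀ (k : ℕ) (i j : Fin n), (A ^ k) i j = if j = i - (k : Fin n) then w ^ k else 0 := by
    intro k
    induction k with
    | zero =>
      intro i j
      simp [Matrix.one_apply, eq_comm]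
    | succ k ih =>
      intro i j
      rw [pow_succ, Matrix.mul_apply]
      have step : ∀ l, (A ^ k) i l * A l j
          = if l = i - (k : Fin n) then (if j = l - 1 then w ^ k * w else 0) else 0 := by
        intro l
        rw [ih, hA]
        by_cases h1 : l = i - (k : Fin n) <;> by_cases h2 : j = l - 1 <;> simp [h1, h2]
      rw [Finset.sum_congr rfl (fun l _ => step l), Finset.sum_ite_eq' Finset.univ]
      have hc : ((k:ℕ)+1 : Fin n) = (k : Fin n) + 1 := by push_cast; ring
      simp [sub_sub, ← hc, pow_succ]
  open Fin.NatCast in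
  have hM : ∀ k : ℕ, A ^ k * S * (A ^ k)ᵀ
      = (σ ^ 2 * (w ^ 2) ^ k) • (1 : Matrix (Fin n) (Fin n) ℝ) := by
    intro k
    ext i j
    rw [Matrix.mul_apply]
    have step : ∀ l, (A ^ k * S) i l * (A ^ k)ᵀ l j
        = if l = i - (k : Fin n) then (if l = j - (k : Fin n) then w ^ k * σ ^ 2 * w ^ k else 0)
          else 0 := by
      intro l
      rw [hS, Matrix.mul_diagonal, Matrix.transpose_apply, hAk, hAk]
      by_cases h1 : l = i - (k : Fin n) <;> by_cases h2 : l = j - (k : Fin n) <;>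
        simp [h1, h2] <;> ring
    rw [Finset.sum_congr rfl (fun l _ => step l), Finset.sum_ite_eq' Finset.univ]
    have hiff : (i - (k : Fin n) = j - (k : Fin n)) ↔ i = j := sub_left_inj
    by_cases h : i = j
    · simp [h, Matrix.one_apply]
      ring
    · have : ¬ (i - (k : Fin n) = j - (k : Fin n)) := fun hh => h (hiff.mp hh)
      simp [h, this, Matrix.one_apply]
  have hsum : Summable (fun k : ℕ => σ ^ 2 * (w ^ 2) ^ k) := by
    apply Summable.mul_left
    exact summable_geometric_of_lt_one (by positivity) (by nlinarith)
  have hΦ0' : Φ0 = (σ ^ 2 / (1 - w ^ 2)) • (1 : Matrix (Fin n) (Fin n) ℝ) := by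
    rw [hΦ0, tsum_congr hM, hsum.tsum_smul_const, tsum_mul_left,
      tsum_geometric_of_lt_one (by positivity) (by nlinarith)]
    rw [div_eq_mul_inv]
  have c0 : (0:ℝ) < σ ^ 2 / (1 - w ^ 2) := by positivity
  have h1 : ∀ i j, Φ0 i j = if i = j then σ ^ 2 / (1 - w ^ 2) else 0 := by
    intro i j
    rw [hΦ0']
    by_cases h : i = j <;> simp [h, Matrix.one_apply]
  have h2 : ∀ i j, Φ1 i j = if j = i - 1 then σ ^ 2 * w / (1 - w ^ 2) else 0 := by
    intro i j
    rw [hΦ1, hΦ0', Matrix.mul_smul, Matrix.mul_one, Matrix.smul_apply, hA]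
    by_cases h : j = i - 1 <;> simp [h] <;> ring
  have hσ2 : (σ:ℝ) ^ 2 ≠ 0 := by positivity
  have hd : σ ^ 2 / (1 - w ^ 2) - (σ ^ 2 * w / (1 - w ^ 2)) ^ 2 / (σ ^ 2 / (1 - w ^ 2))
      = σ ^ 2 := by
    field_simp
  refine ⟨h1, h2, ?_⟩
  intro j i
  rw [hC, h2, h1, h1]
  by_cases h : j = i - 1
  · rw [if_pos h, if_pos h, if_pos (rfl : i = i), if_pos (rfl : j = j), hd]
    congr 1
    rw [div_right_comm, div_self hσ2]
  · rw [if_neg h, if_neg h, if_pos (rfl : i = i), if_pos (rfl : j = j)]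
    have : (0:ℝ) ^ 2 / (σ ^ 2 / (1 - w ^ 2)) = 0 := by simp
    rw [this, sub_zero, div_self (ne_of_gt c0), Real.log_one, mul_zero]
end
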